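/- Let f : ℝ₊ → ℝ₊ be a nonincreasing positive function with ∑_{k=0}^∞ f(k) < ∞, and fix τ > 1. Then there exists a function e : ℝ₊ → ℝ₊ such that e(r) → 0 as r → ∞ and (e(r) − e(τr))/(r·f(r)) → ∞ as r → ∞. -/

import Mathlib

open Filter Topology

/-- For a nonincreasing positive Floyd function `f` with summable values at
the nonnegative integers, and fixed `τ > 1`, there is a positive function `e` with
`e r → 0` and `(e r - e (τ r)) / (r * f r) → ∞` as `r → ∞`. -/
theorem stmt0 (f : ℝ → ℝ) (hpos : ∀ x, 0 < x → 0 < f x)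
    (hmono : ∀ x y, 0 < x → x ≤ y → f y ≤ f x)
    (hsum : Summable fun k : ℕ => f k) (τ : ℝ) (hτ : 1 < τ) :
    ∃ e : ℝ → ℝ, (∀ r, 0 < r → 0 < e r) ∧
      Tendsto e atTop (𝓝 0) ∧
      Tendsto (fun r => (e r - e (τ * r)) / (r * f r)) atTop atTop := by
  have hτ0 : (0:ℝ) < τ := lt_trans one_pos hτ
  set g : ℕ → ℝ := fun k => f k with hgdef
  set Sn : ℕ → ℝ := fun n => ∑' k : ℕ, g (k + n) with hSndef
  have hSn_eq : ∀ n, Sn n = (∑' k, g k) - ∑ i ∈ Finset.range n, g i := by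
    intro n
    have := Summable.sum_add_tsum_nat_add (f := g) n hsum
    simp only [hSndef]
    linarith
  have hSn_pos : ∀ n, 1 ≤ n → 0 < Sn n := by
    intro n hn
    refine Summable.tsum_pos ((summable_nat_add_iff n).2 hsum) (fun k => ?_) 0 ?_
    · exact le_of_lt (hpos _ (by positivity))
    · exact hpos _ (by positivity)
  have hSn_tendsto : Tendsto Sn atTop (𝓝 0) := tendsto_sum_nat_add g
  -- the ceiling index function
  have hceil : Tendsto (fun r : ℝ => ⌈r / τ⌉₊) atTop atTop :=
    tendsto_nat_ceil_atTop.comp (tendsto_id.atTop_div_const hτ0)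
  refine ⟨fun r => 2 * Real.sqrt (Sn ⌈r / τ⌉₊), ?_, ?_, ?_⟩
  · intro r hr
    have h1 : 1 ≤ ⌈r / τ⌉₊ := Nat.one_le_ceil_iff.2 (by positivity)
    have := hSn_pos _ h1
    positivity
  · have h0 : Tendsto (fun r : ℝ => Sn ⌈r / τ⌉₊) atTop (𝓝 0) := hSn_tendsto.comp hceil
    have : Tendsto (fun r : ℝ => 2 * Real.sqrt (Sn ⌈r / τ⌉₊)) atTop (𝓝 (2 * Real.sqrt 0)) :=
      ((Real.continuous_sqrt.tendsto 0).comp h0).const_mul 2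
    simpa using this
  · -- main estimate
    set c : ℝ := (1 - τ⁻¹) / 2 with hc
    have hc0 : 0 < c := by
      have : τ⁻¹ < 1 := inv_lt_one_of_one_lt₀ hτ
      simp only [hc]; linarith
    have hsqrt : Tendsto (fun r : ℝ => Real.sqrt (Sn ⌈r / τ⌉₊)) atTop (𝓝[>] 0) := by
      rw [tendsto_nhdsWithin_iff]
      constructor
      · have h0 : Tendsto (fun r : ℝ => Sn ⌈r / τ⌉₊) atTop (𝓝 0) := hSn_tendsto.comp hceil
        simpa [Function.comp_def] using (Real.continuous_sqrt.tendsto 0).comp h0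
      · filter_upwards [eventually_ge_atTop τ] with r hr
        have h1 : 1 ≤ ⌈r / τ⌉₊ := Nat.one_le_ceil_iff.2 (div_pos (hτ0.trans_le hr) hτ0)
        exact Set.mem_Ioi.2 (Real.sqrt_pos.2 (hSn_pos _ h1))
    have hφ : Tendsto (fun r : ℝ => c * (Real.sqrt (Sn ⌈r / τ⌉₊))⁻¹) atTop atTop :=
      (hsqrt.inv_tendsto_nhdsGT_zero).const_mul_atTop hc0
    refine tendsto_atTop_mono' _ ?_ hφ
    have hτinv : τ⁻¹ < 1 := inv_lt_one_of_one_lt₀ hτ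
    have hR : (0:ℝ) < 2 / (1 - τ⁻¹) := by
      apply div_pos two_pos; linarith
    filter_upwards [eventually_ge_atTop (max τ (2 / (1 - τ⁻¹))), eventually_gt_atTop 0]
      with r hr hr0
    have hrτ : τ ≤ r := le_trans (le_max_left _ _) hr
    have hrR : 2 / (1 - τ⁻¹) ≤ r := le_trans (le_max_right _ _) hr
    set a : ℕ := ⌈r / τ⌉₊ with ha
    set b : ℕ := ⌈r⌉₊ with hb
    have hdiv : 0 < r / τ := div_pos hr0 hτ0
    have ha1 : 1 ≤ a := Nat.one_le_ceil_iff.2 hdiv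
    have hab : a ≤ b := Nat.ceil_le_ceil (by
      rw [div_le_iff₀ hτ0]; nlinarith)
    have hX : 0 < Sn a := hSn_pos _ ha1
    have hY : 0 < Sn b := hSn_pos _ (le_trans ha1 hab)
    -- e (τ * r) index is b
    have hidx : ⌈τ * r / τ⌉₊ = b := by
      have : τ * r / τ = r := by field_simp
      rw [this]
    -- difference of tails is a finite sum
    have hdiff : Sn a - Sn b = ∑ i ∈ Finset.Ico a b, g i := by
      rw [hSn_eq a, hSn_eq b, Finset.sum_Ico_eq_sub _ hab]; ring
    -- each term is at least f r
    have hterm : ∀ i ∈ Finset.Ico a b, f r ≤ g i := by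
      intro i hi
      rw [Finset.mem_Ico] at hi
      have hi1 : 1 ≤ i := le_trans ha1 hi.1
      have hib : (i:ℝ) ≤ r := by
        have h1 : (i:ℝ) + 1 ≤ (b:ℝ) := by exact_mod_cast Nat.succ_le_of_lt hi.2
        have h2 : (b:ℝ) < r + 1 := Nat.ceil_lt_add_one (le_of_lt hr0)
        linarith
      exact hmono _ _ (by exact_mod_cast hi1) hib
    have hfr : 0 < f r := hpos r hr0
    have hsum_lb : ((b - a : ℕ) : ℝ) * f r ≤ Sn a - Sn b := by
      rw [hdiff]
      calc ((b - a : ℕ) : ℝ) * f r = (Finset.Ico a b).card • f r := by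
            rw [Nat.card_Ico, nsmul_eq_mul]
        _ ≤ ∑ i ∈ Finset.Ico a b, g i := Finset.card_nsmul_le_sum _ _ _ hterm
    -- count lower bound
    have hcount : c * r ≤ ((b - a : ℕ) : ℝ) := by
      have hcast : ((b - a : ℕ) : ℝ) = (b:ℝ) - (a:ℝ) := by
        rw [Nat.cast_sub hab]
      have hbr : r ≤ (b:ℝ) := Nat.le_ceil r
      have har : (a:ℝ) < r / τ + 1 := Nat.ceil_lt_add_one (le_of_lt hdiv)
      have hτ1 : 0 < 1 - τ⁻¹ := by
        have : τ⁻¹ < 1 := inv_lt_one_of_one_lt₀ hτ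
        linarith
      have heq : (1 - τ⁻¹) / 2 * (2 / (1 - τ⁻¹)) = 1 := by
        rw [div_mul_div_comm, div_eq_one_iff_eq (by nlinarith)]
        ring
      have h1 : 1 ≤ (1 - τ⁻¹) / 2 * r := by
        calc (1:ℝ) = (1 - τ⁻¹) / 2 * (2 / (1 - τ⁻¹)) := heq.symm
          _ ≤ (1 - τ⁻¹) / 2 * r :=
            mul_le_mul_of_nonneg_left hrR (by linarith)
      have har' : (a:ℝ) < τ⁻¹ * r + 1 := by
        have hrd : r / τ = τ⁻¹ * r := by rw [div_eq_mul_inv, mul_comm]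
        rwa [hrd] at har
      rw [hcast, hc]
      linarith [hbr, har', h1]
    -- the sqrt inequality
    set x := Real.sqrt (Sn a) with hx
    set y := Real.sqrt (Sn b) with hy
    have hx0 : 0 < x := Real.sqrt_pos.2 hX
    have hy0 : 0 < y := Real.sqrt_pos.2 hY
    have hx2 : x ^ 2 = Sn a := Real.sq_sqrt (le_of_lt hX)
    have hy2 : y ^ 2 = Sn b := Real.sq_sqrt (le_of_lt hY)
    have hkey : (Sn a - Sn b) / x ≤ 2 * x - 2 * y := by
      rw [div_le_iff₀ hx0, ← hx2, ← hy2]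
      nlinarith [sq_nonneg (x - y)]
    -- put it together
    have hfinal : c * x⁻¹ ≤ (2 * x - 2 * y) / (r * f r) := by
      have h1 : c * r * f r ≤ Sn a - Sn b :=
        le_trans (mul_le_mul_of_nonneg_right hcount hfr.le) hsum_lb
      have h2 : c * r * f r / x ≤ 2 * x - 2 * y :=
        le_trans ((div_le_div_iff_of_pos_right hx0).mpr h1) hkey
      rw [le_div_iff₀ (by positivity)]
      calc c * x⁻¹ * (r * f r) = c * r * f r / x := by field_simp
        _ ≤ 2 * x - 2 * y := h2
    calc c * x⁻¹ ≤ (2 * x - 2 * y) / (r * f r) := hfinal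
      _ = (2 * Real.sqrt (Sn ⌈r / τ⌉₊) - 2 * Real.sqrt (Sn ⌈τ * r / τ⌉₊)) / (r * f r) := by
          rw [hidx]
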